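/- arXiv:2107.09107 — 3 statements merged into one kernel-verified Lean document; each statement's English description precedes it below -/
import Mathlib

section
/- For a = 2671465728531600 one has N_4(a) ≥ 180; in particular, a equals the multinomial coefficients 37!/(17!·11!·9!·0!), 38!/(19!·11!·8!·0!), 39!/(19!·14!·6!·0!), 40!/(19!·16!·5!·0!), 40!/(20!·16!·3!·1!), 39!/(21!·13!·4!·1!), 38!/(22!·10!·4!·2!), and a!/((a-1)!·1!·0!·0!), each with its permutations of the lower entries. -/
open Nat
set_option maxRecDepth 100000

lemma mult4 (w x y z a : ℕ)
    (h : a * (w ! * x ! * y ! * z !) = (w + x + y + z)!) :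
    Nat.multinomial Finset.univ ![w, x, y, z] = a := by
  have hs := Nat.multinomial_spec (Finset.univ) ![w, x, y, z]
  rw [Fin.prod_univ_four, Fin.sum_univ_four] at hs
  simp only [Matrix.cons_val_zero, Matrix.cons_val_one, Matrix.head_cons,
    Matrix.cons_val_two, Matrix.tail_cons, Matrix.cons_val_three] at hs
  have hp : 0 < w ! * x ! * y ! * z ! := by positivity
  exact Nat.eq_of_mul_eq_mul_left hp (by linarith)

lemma L0 (n : ℕ) : Nat.multinomial Finset.univ ![n, 1, 0, 0] = n + 1 := by
  apply mult4
  rw [Nat.factorial_one, Nat.factorial_zero]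
  rw [show n + 1 + 0 + 0 = n + 1 from by omega]
  rw [Nat.factorial_succ]
  ring

lemma L1 (n : ℕ) : Nat.multinomial Finset.univ ![n, 0, 1, 0] = n + 1 := by
  apply mult4
  rw [Nat.factorial_one, Nat.factorial_zero]
  rw [show n + 0 + 1 + 0 = n + 1 from by omega]
  rw [Nat.factorial_succ]
  ring

lemma L2 (n : ℕ) : Nat.multinomial Finset.univ ![n, 0, 0, 1] = n + 1 := by
  apply mult4
  rw [Nat.factorial_one, Nat.factorial_zero]
  rw [show n + 0 + 0 + 1 = n + 1 from by omega]
  rw [Nat.factorial_succ]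
  ring

lemma L3 (n : ℕ) : Nat.multinomial Finset.univ ![1, n, 0, 0] = n + 1 := by
  apply mult4
  rw [Nat.factorial_one, Nat.factorial_zero]
  rw [show 1 + n + 0 + 0 = n + 1 from by omega]
  rw [Nat.factorial_succ]
  ring

lemma L4 (n : ℕ) : Nat.multinomial Finset.univ ![0, n, 1, 0] = n + 1 := by
  apply mult4
  rw [Nat.factorial_one, Nat.factorial_zero]
  rw [show 0 + n + 1 + 0 = n + 1 from by omega]
  rw [Nat.factorial_succ]
  ring

lemma L5 (n : ℕ) : Nat.multinomial Finset.univ ![0, n, 0, 1] = n + 1 := by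
  apply mult4
  rw [Nat.factorial_one, Nat.factorial_zero]
  rw [show 0 + n + 0 + 1 = n + 1 from by omega]
  rw [Nat.factorial_succ]
  ring

lemma L6 (n : ℕ) : Nat.multinomial Finset.univ ![1, 0, n, 0] = n + 1 := by
  apply mult4
  rw [Nat.factorial_one, Nat.factorial_zero]
  rw [show 1 + 0 + n + 0 = n + 1 from by omega]
  rw [Nat.factorial_succ]
  ring

lemma L7 (n : ℕ) : Nat.multinomial Finset.univ ![0, 1, n, 0] = n + 1 := by
  apply mult4
  rw [Nat.factorial_one, Nat.factorial_zero]
  rw [show 0 + 1 + n + 0 = n + 1 from by omega]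
  rw [Nat.factorial_succ]
  ring

lemma L8 (n : ℕ) : Nat.multinomial Finset.univ ![0, 0, n, 1] = n + 1 := by
  apply mult4
  rw [Nat.factorial_one, Nat.factorial_zero]
  rw [show 0 + 0 + n + 1 = n + 1 from by omega]
  rw [Nat.factorial_succ]
  ring

lemma L9 (n : ℕ) : Nat.multinomial Finset.univ ![1, 0, 0, n] = n + 1 := by
  apply mult4
  rw [Nat.factorial_one, Nat.factorial_zero]
  rw [show 1 + 0 + 0 + n = n + 1 from by omega]
  rw [Nat.factorial_succ]
  ring

lemma L10 (n : ℕ) : Nat.multinomial Finset.univ ![0, 1, 0, n] = n + 1 := by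
  apply mult4
  rw [Nat.factorial_one, Nat.factorial_zero]
  rw [show 0 + 1 + 0 + n = n + 1 from by omega]
  rw [Nat.factorial_succ]
  ring

lemma L11 (n : ℕ) : Nat.multinomial Finset.univ ![0, 0, 1, n] = n + 1 := by
  apply mult4
  rw [Nat.factorial_one, Nat.factorial_zero]
  rw [show 0 + 0 + 1 + n = n + 1 from by omega]
  rw [Nat.factorial_succ]
  ring

lemma multinomial_one_of_zero {α : Type*} (s : Finset α) (m : α → ℕ) (h : ∀ j ∈ s, m j = 0) :
    Nat.multinomial s m = 1 := by
  have hs := Nat.multinomial_spec s m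
  rw [Finset.sum_eq_zero h, Finset.prod_congr rfl (fun j hj => by rw [h j hj])] at hs
  simpa using hs

lemma bound (m : Fin 4 → ℕ) (a : ℕ) (ha : 2 ≤ a)
    (hm : Nat.multinomial Finset.univ m = a) (i : Fin 4) : m i ≤ a := by
  rcases Nat.eq_zero_or_pos (m i) with h0 | h1
  · omega
  rw [← Finset.insert_erase (Finset.mem_univ i),
    Nat.multinomial_insert (Finset.notMem_erase i _)] at hm
  by_cases hj : ∀ j ∈ Finset.univ.erase i, m j = 0
  · rw [Finset.sum_eq_zero hj, multinomial_one_of_zero _ _ hj] at hm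
    simp at hm
    omega
  · push_neg at hj
    obtain ⟨j, hjmem, hj0⟩ := hj
    have hsum : m j ≤ (Finset.univ.erase i).sum m :=
      Finset.single_le_sum (f := m) (fun _ _ => Nat.zero_le _) hjmem
    calc m i ≤ m i + 1 := Nat.le_succ _
      _ = (m i + 1).choose (m i) := (Nat.choose_succ_self_right _).symm
      _ ≤ (m i + (Finset.univ.erase i).sum m).choose (m i) :=
          Nat.choose_le_choose _ (by omega)
      _ ≤ (m i + (Finset.univ.erase i).sum m).choose (m i) *
            Nat.multinomial (Finset.univ.erase i) m :=
          Nat.le_mul_of_pos_right _ (Nat.multinomial_pos _ _)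
      _ = a := hm

lemma finS (a : ℕ) (ha : 2 ≤ a) :
    {m : Fin 4 → ℕ | Nat.multinomial Finset.univ m = a}.Finite := by
  apply Set.Finite.subset (Set.Finite.pi (fun _ : Fin 4 => Set.finite_Iic a))
  intro m hm
  simp only [Set.mem_pi, Set.mem_Iic]
  intro i _
  exact bound m a ha hm i

def g (p : ℕ × ℕ × ℕ × ℕ) : Fin 4 → ℕ := ![p.1, p.2.1, p.2.2.1, p.2.2.2]

lemma ginj : Function.Injective g := by
  rintro ⟨a1, a2, a3, a4⟩ ⟨b1, b2, b3, b4⟩ h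
  have h0 := congrFun h 0
  have h1 := congrFun h 1
  have h2 := congrFun h 2
  have h3 := congrFun h 3
  simp only [g, Matrix.cons_val_zero, Matrix.cons_val_one, Matrix.head_cons,
    Matrix.cons_val_two, Matrix.tail_cons, Matrix.cons_val_three] at h0 h1 h2 h3
  subst h0; subst h1; subst h2; subst h3
  rfl

def T : Finset (ℕ × ℕ × ℕ × ℕ) :=
  {(0, 9, 11, 17),
    (0, 9, 17, 11),
    (0, 11, 9, 17),
    (0, 11, 17, 9),
    (0, 17, 9, 11),
    (0, 17, 11, 9),
    (9, 0, 11, 17),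
    (9, 0, 17, 11),
    (9, 11, 0, 17),
    (9, 11, 17, 0),
    (9, 17, 0, 11),
    (9, 17, 11, 0),
    (11, 0, 9, 17),
    (11, 0, 17, 9),
    (11, 9, 0, 17),
    (11, 9, 17, 0),
    (11, 17, 0, 9),
    (11, 17, 9, 0),
    (17, 0, 9, 11),
    (17, 0, 11, 9),
    (17, 9, 0, 11),
    (17, 9, 11, 0),
    (17, 11, 0, 9),
    (17, 11, 9, 0),
    (0, 8, 11, 19),
    (0, 8, 19, 11),
    (0, 11, 8, 19),
    (0, 11, 19, 8),
    (0, 19, 8, 11),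
    (0, 19, 11, 8),
    (8, 0, 11, 19),
    (8, 0, 19, 11),
    (8, 11, 0, 19),
    (8, 11, 19, 0),
    (8, 19, 0, 11),
    (8, 19, 11, 0),
    (11, 0, 8, 19),
    (11, 0, 19, 8),
    (11, 8, 0, 19),
    (11, 8, 19, 0),
    (11, 19, 0, 8),
    (11, 19, 8, 0),
    (19, 0, 8, 11),
    (19, 0, 11, 8),
    (19, 8, 0, 11),
    (19, 8, 11, 0),
    (19, 11, 0, 8),
    (19, 11, 8, 0),
    (0, 6, 14, 19),
    (0, 6, 19, 14),
    (0, 14, 6, 19),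
    (0, 14, 19, 6),
    (0, 19, 6, 14),
    (0, 19, 14, 6),
    (6, 0, 14, 19),
    (6, 0, 19, 14),
    (6, 14, 0, 19),
    (6, 14, 19, 0),
    (6, 19, 0, 14),
    (6, 19, 14, 0),
    (14, 0, 6, 19),
    (14, 0, 19, 6),
    (14, 6, 0, 19),
    (14, 6, 19, 0),
    (14, 19, 0, 6),
    (14, 19, 6, 0),
    (19, 0, 6, 14),
    (19, 0, 14, 6),
    (19, 6, 0, 14),
    (19, 6, 14, 0),
    (19, 14, 0, 6),
    (19, 14, 6, 0),
    (0, 5, 16, 19),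
    (0, 5, 19, 16),
    (0, 16, 5, 19),
    (0, 16, 19, 5),
    (0, 19, 5, 16),
    (0, 19, 16, 5),
    (5, 0, 16, 19),
    (5, 0, 19, 16),
    (5, 16, 0, 19),
    (5, 16, 19, 0),
    (5, 19, 0, 16),
    (5, 19, 16, 0),
    (16, 0, 5, 19),
    (16, 0, 19, 5),
    (16, 5, 0, 19),
    (16, 5, 19, 0),
    (16, 19, 0, 5),
    (16, 19, 5, 0),
    (19, 0, 5, 16),
    (19, 0, 16, 5),
    (19, 5, 0, 16),
    (19, 5, 16, 0),
    (19, 16, 0, 5),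
    (19, 16, 5, 0),
    (1, 3, 16, 20),
    (1, 3, 20, 16),
    (1, 16, 3, 20),
    (1, 16, 20, 3),
    (1, 20, 3, 16),
    (1, 20, 16, 3),
    (3, 1, 16, 20),
    (3, 1, 20, 16),
    (3, 16, 1, 20),
    (3, 16, 20, 1),
    (3, 20, 1, 16),
    (3, 20, 16, 1),
    (16, 1, 3, 20),
    (16, 1, 20, 3),
    (16, 3, 1, 20),
    (16, 3, 20, 1),
    (16, 20, 1, 3),
    (16, 20, 3, 1),
    (20, 1, 3, 16),
    (20, 1, 16, 3),
    (20, 3, 1, 16),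
    (20, 3, 16, 1),
    (20, 16, 1, 3),
    (20, 16, 3, 1),
    (1, 4, 13, 21),
    (1, 4, 21, 13),
    (1, 13, 4, 21),
    (1, 13, 21, 4),
    (1, 21, 4, 13),
    (1, 21, 13, 4),
    (4, 1, 13, 21),
    (4, 1, 21, 13),
    (4, 13, 1, 21),
    (4, 13, 21, 1),
    (4, 21, 1, 13),
    (4, 21, 13, 1),
    (13, 1, 4, 21),
    (13, 1, 21, 4),
    (13, 4, 1, 21),
    (13, 4, 21, 1),
    (13, 21, 1, 4),
    (13, 21, 4, 1),
    (21, 1, 4, 13),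
    (21, 1, 13, 4),
    (21, 4, 1, 13),
    (21, 4, 13, 1),
    (21, 13, 1, 4),
    (21, 13, 4, 1),
    (2, 4, 10, 22),
    (2, 4, 22, 10),
    (2, 10, 4, 22),
    (2, 10, 22, 4),
    (2, 22, 4, 10),
    (2, 22, 10, 4),
    (4, 2, 10, 22),
    (4, 2, 22, 10),
    (4, 10, 2, 22),
    (4, 10, 22, 2),
    (4, 22, 2, 10),
    (4, 22, 10, 2),
    (10, 2, 4, 22),
    (10, 2, 22, 4),
    (10, 4, 2, 22),
    (10, 4, 22, 2),
    (10, 22, 2, 4),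
    (10, 22, 4, 2),
    (22, 2, 4, 10),
    (22, 2, 10, 4),
    (22, 4, 2, 10),
    (22, 4, 10, 2),
    (22, 10, 2, 4),
    (22, 10, 4, 2),
    (2671465728531599, 1, 0, 0),
    (2671465728531599, 0, 1, 0),
    (2671465728531599, 0, 0, 1),
    (1, 2671465728531599, 0, 0),
    (0, 2671465728531599, 1, 0),
    (0, 2671465728531599, 0, 1),
    (1, 0, 2671465728531599, 0),
    (0, 1, 2671465728531599, 0),
    (0, 0, 2671465728531599, 1),
    (1, 0, 0, 2671465728531599),
    (0, 1, 0, 2671465728531599),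
    (0, 0, 1, 2671465728531599)}

lemma key : ∀ p ∈ T, Nat.multinomial Finset.univ (g p) = 2671465728531600 := by
  intro p hp
  simp only [T, Finset.mem_insert, Finset.mem_singleton] at hp
  rcases hp with rfl|rfl|rfl|rfl|rfl|rfl|rfl|rfl|rfl|rfl|rfl|rfl|rfl|rfl|rfl|rfl|rfl|rfl|rfl|rfl|rfl|rfl|rfl|rfl|rfl|rfl|rfl|rfl|rfl|rfl|rfl|rfl|rfl|rfl|rfl|rfl|rfl|rfl|rfl|rfl|rfl|rfl|rfl|rfl|rfl|rfl|rfl|rfl|rfl|rfl|rfl|rfl|rfl|rfl|rfl|rfl|rfl|rfl|rfl|rfl|rfl|rfl|rfl|rfl|rfl|rfl|rfl|rfl|rfl|rfl|rfl|rfl|rfl|rfl|rfl|rfl|rfl|rfl|rfl|rfl|rfl|rfl|rfl|rfl|rfl|rfl|rfl|rfl|rfl|rfl|rfl|rfl|rfl|rfl|rfl|rfl|rfl|rfl|rfl|rfl|rfl|rfl|rfl|rfl|rfl|rfl|rfl|rfl|rfl|rfl|rfl|rfl|rfl|rfl|rfl|rfl|rfl|rfl|rfl|rfl|rfl|rfl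|rfl|rfl|rfl|rfl|rfl|rfl|rfl|rfl|rfl|rfl|rfl|rfl|rfl|rfl|rfl|rfl|rfl|rfl|rfl|rfl|rfl|rfl|rfl|rfl|rfl|rfl|rfl|rfl|rfl|rfl|rfl|rfl|rfl|rfl|rfl|rfl|rfl|rfl|rfl|rfl|rfl|rfl|rfl|rfl|rfl|rfl|rfl|rfl|rfl|rfl|rfl|rfl|rfl|rfl|rfl|rfl|rfl|rfl
  · exact mult4 _ _ _ _ _ (by decide)
  · exact mult4 _ _ _ _ _ (by decide)
  · exact mult4 _ _ _ _ _ (by decide)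
  · exact mult4 _ _ _ _ _ (by decide)
  · exact mult4 _ _ _ _ _ (by decide)
  · exact mult4 _ _ _ _ _ (by decide)
  · exact mult4 _ _ _ _ _ (by decide)
  · exact mult4 _ _ _ _ _ (by decide)
  · exact mult4 _ _ _ _ _ (by decide)
  · exact mult4 _ _ _ _ _ (by decide)
  · exact mult4 _ _ _ _ _ (by decide)
  · exact mult4 _ _ _ _ _ (by decide)
  · exact mult4 _ _ _ _ _ (by decide)
  · exact mult4 _ _ _ _ _ (by decide)
  · exact mult4 _ _ _ _ _ (by decide)
  · exact mult4 _ _ _ _ _ (by decide)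
  · exact mult4 _ _ _ _ _ (by decide)
  · exact mult4 _ _ _ _ _ (by decide)
  · exact mult4 _ _ _ _ _ (by decide)
  · exact mult4 _ _ _ _ _ (by decide)
  · exact mult4 _ _ _ _ _ (by decide)
  · exact mult4 _ _ _ _ _ (by decide)
  · exact mult4 _ _ _ _ _ (by decide)
  · exact mult4 _ _ _ _ _ (by decide)
  · exact mult4 _ _ _ _ _ (by decide)
  · exact mult4 _ _ _ _ _ (by decide)
  · exact mult4 _ _ _ _ _ (by decide)
  · exact mult4 _ _ _ _ _ (by decide)
  · exact mult4 _ _ _ _ _ (by decide)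
  · exact mult4 _ _ _ _ _ (by decide)
  · exact mult4 _ _ _ _ _ (by decide)
  · exact mult4 _ _ _ _ _ (by decide)
  · exact mult4 _ _ _ _ _ (by decide)
  · exact mult4 _ _ _ _ _ (by decide)
  · exact mult4 _ _ _ _ _ (by decide)
  · exact mult4 _ _ _ _ _ (by decide)
  · exact mult4 _ _ _ _ _ (by decide)
  · exact mult4 _ _ _ _ _ (by decide)
  · exact mult4 _ _ _ _ _ (by decide)
  · exact mult4 _ _ _ _ _ (by decide)
  · exact mult4 _ _ _ _ _ (by decide)
  · exact mult4 _ _ _ _ _ (by decide)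
  · exact mult4 _ _ _ _ _ (by decide)
  · exact mult4 _ _ _ _ _ (by decide)
  · exact mult4 _ _ _ _ _ (by decide)
  · exact mult4 _ _ _ _ _ (by decide)
  · exact mult4 _ _ _ _ _ (by decide)
  · exact mult4 _ _ _ _ _ (by decide)
  · exact mult4 _ _ _ _ _ (by decide)
  · exact mult4 _ _ _ _ _ (by decide)
  · exact mult4 _ _ _ _ _ (by decide)
  · exact mult4 _ _ _ _ _ (by decide)
  · exact mult4 _ _ _ _ _ (by decide)
  · exact mult4 _ _ _ _ _ (by decide)
  · exact mult4 _ _ _ _ _ (by decide)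
  · exact mult4 _ _ _ _ _ (by decide)
  · exact mult4 _ _ _ _ _ (by decide)
  · exact mult4 _ _ _ _ _ (by decide)
  · exact mult4 _ _ _ _ _ (by decide)
  · exact mult4 _ _ _ _ _ (by decide)
  · exact mult4 _ _ _ _ _ (by decide)
  · exact mult4 _ _ _ _ _ (by decide)
  · exact mult4 _ _ _ _ _ (by decide)
  · exact mult4 _ _ _ _ _ (by decide)
  · exact mult4 _ _ _ _ _ (by decide)
  · exact mult4 _ _ _ _ _ (by decide)
  · exact mult4 _ _ _ _ _ (by decide)
  · exact mult4 _ _ _ _ _ (by decide)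
  · exact mult4 _ _ _ _ _ (by decide)
  · exact mult4 _ _ _ _ _ (by decide)
  · exact mult4 _ _ _ _ _ (by decide)
  · exact mult4 _ _ _ _ _ (by decide)
  · exact mult4 _ _ _ _ _ (by decide)
  · exact mult4 _ _ _ _ _ (by decide)
  · exact mult4 _ _ _ _ _ (by decide)
  · exact mult4 _ _ _ _ _ (by decide)
  · exact mult4 _ _ _ _ _ (by decide)
  · exact mult4 _ _ _ _ _ (by decide)
  · exact mult4 _ _ _ _ _ (by decide)
  · exact mult4 _ _ _ _ _ (by decide)
  · exact mult4 _ _ _ _ _ (by decide)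
  · exact mult4 _ _ _ _ _ (by decide)
  · exact mult4 _ _ _ _ _ (by decide)
  · exact mult4 _ _ _ _ _ (by decide)
  · exact mult4 _ _ _ _ _ (by decide)
  · exact mult4 _ _ _ _ _ (by decide)
  · exact mult4 _ _ _ _ _ (by decide)
  · exact mult4 _ _ _ _ _ (by decide)
  · exact mult4 _ _ _ _ _ (by decide)
  · exact mult4 _ _ _ _ _ (by decide)
  · exact mult4 _ _ _ _ _ (by decide)
  · exact mult4 _ _ _ _ _ (by decide)
  · exact mult4 _ _ _ _ _ (by decide)
  · exact mult4 _ _ _ _ _ (by decide)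
  · exact mult4 _ _ _ _ _ (by decide)
  · exact mult4 _ _ _ _ _ (by decide)
  · exact mult4 _ _ _ _ _ (by decide)
  · exact mult4 _ _ _ _ _ (by decide)
  · exact mult4 _ _ _ _ _ (by decide)
  · exact mult4 _ _ _ _ _ (by decide)
  · exact mult4 _ _ _ _ _ (by decide)
  · exact mult4 _ _ _ _ _ (by decide)
  · exact mult4 _ _ _ _ _ (by decide)
  · exact mult4 _ _ _ _ _ (by decide)
  · exact mult4 _ _ _ _ _ (by decide)
  · exact mult4 _ _ _ _ _ (by decide)
  · exact mult4 _ _ _ _ _ (by decide)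
  · exact mult4 _ _ _ _ _ (by decide)
  · exact mult4 _ _ _ _ _ (by decide)
  · exact mult4 _ _ _ _ _ (by decide)
  · exact mult4 _ _ _ _ _ (by decide)
  · exact mult4 _ _ _ _ _ (by decide)
  · exact mult4 _ _ _ _ _ (by decide)
  · exact mult4 _ _ _ _ _ (by decide)
  · exact mult4 _ _ _ _ _ (by decide)
  · exact mult4 _ _ _ _ _ (by decide)
  · exact mult4 _ _ _ _ _ (by decide)
  · exact mult4 _ _ _ _ _ (by decide)
  · exact mult4 _ _ _ _ _ (by decide)
  · exact mult4 _ _ _ _ _ (by decide)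
  · exact mult4 _ _ _ _ _ (by decide)
  · exact mult4 _ _ _ _ _ (by decide)
  · exact mult4 _ _ _ _ _ (by decide)
  · exact mult4 _ _ _ _ _ (by decide)
  · exact mult4 _ _ _ _ _ (by decide)
  · exact mult4 _ _ _ _ _ (by decide)
  · exact mult4 _ _ _ _ _ (by decide)
  · exact mult4 _ _ _ _ _ (by decide)
  · exact mult4 _ _ _ _ _ (by decide)
  · exact mult4 _ _ _ _ _ (by decide)
  · exact mult4 _ _ _ _ _ (by decide)
  · exact mult4 _ _ _ _ _ (by decide)
  · exact mult4 _ _ _ _ _ (by decide)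
  · exact mult4 _ _ _ _ _ (by decide)
  · exact mult4 _ _ _ _ _ (by decide)
  · exact mult4 _ _ _ _ _ (by decide)
  · exact mult4 _ _ _ _ _ (by decide)
  · exact mult4 _ _ _ _ _ (by decide)
  · exact mult4 _ _ _ _ _ (by decide)
  · exact mult4 _ _ _ _ _ (by decide)
  · exact mult4 _ _ _ _ _ (by decide)
  · exact mult4 _ _ _ _ _ (by decide)
  · exact mult4 _ _ _ _ _ (by decide)
  · exact mult4 _ _ _ _ _ (by decide)
  · exact mult4 _ _ _ _ _ (by decide)
  · exact mult4 _ _ _ _ _ (by decide)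
  · exact mult4 _ _ _ _ _ (by decide)
  · exact mult4 _ _ _ _ _ (by decide)
  · exact mult4 _ _ _ _ _ (by decide)
  · exact mult4 _ _ _ _ _ (by decide)
  · exact mult4 _ _ _ _ _ (by decide)
  · exact mult4 _ _ _ _ _ (by decide)
  · exact mult4 _ _ _ _ _ (by decide)
  · exact mult4 _ _ _ _ _ (by decide)
  · exact mult4 _ _ _ _ _ (by decide)
  · exact mult4 _ _ _ _ _ (by decide)
  · exact mult4 _ _ _ _ _ (by decide)
  · exact mult4 _ _ _ _ _ (by decide)
  · exact mult4 _ _ _ _ _ (by decide)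
  · exact mult4 _ _ _ _ _ (by decide)
  · exact mult4 _ _ _ _ _ (by decide)
  · exact mult4 _ _ _ _ _ (by decide)
  · exact mult4 _ _ _ _ _ (by decide)
  · exact mult4 _ _ _ _ _ (by decide)
  · exact mult4 _ _ _ _ _ (by decide)
  · exact mult4 _ _ _ _ _ (by decide)
  · exact mult4 _ _ _ _ _ (by decide)
  · exact mult4 _ _ _ _ _ (by decide)
  · simpa [g] using L0 2671465728531599
  · simpa [g] using L1 2671465728531599
  · simpa [g] using L2 2671465728531599
  · simpa [g] using L3 2671465728531599
  · simpa [g] using L4 2671465728531599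
  · simpa [g] using L5 2671465728531599
  · simpa [g] using L6 2671465728531599
  · simpa [g] using L7 2671465728531599
  · simpa [g] using L8 2671465728531599
  · simpa [g] using L9 2671465728531599
  · simpa [g] using L10 2671465728531599
  · simpa [g] using L11 2671465728531599

/-- `Nk k a` is the number of `k`-tuples `(m₁, …, m_k)` of nonnegative integers whose
multinomial coefficient `(m₁ + ⋯ + m_k)! / (m₁! ⋯ m_k!)` equals `a`. -/
noncomputable def Nk (k : ℕ) (a : ℕ) : ℕ :=
  {m : Fin k → ℕ | Nat.multinomial Finset.univ m = a}.ncard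

theorem N4_big_value :
    180 ≤ Nk 4 2671465728531600 ∧
    Nat.multinomial Finset.univ ![17, 11, 9, 0] = 2671465728531600 ∧
    Nat.multinomial Finset.univ ![19, 11, 8, 0] = 2671465728531600 ∧
    Nat.multinomial Finset.univ ![19, 14, 6, 0] = 2671465728531600 ∧
    Nat.multinomial Finset.univ ![19, 16, 5, 0] = 2671465728531600 ∧
    Nat.multinomial Finset.univ ![20, 16, 3, 1] = 2671465728531600 ∧
    Nat.multinomial Finset.univ ![21, 13, 4, 1] = 2671465728531600 ∧
    Nat.multinomial Finset.univ ![22, 10, 4, 2] = 2671465728531600 ∧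
    Nat.multinomial Finset.univ ![2671465728531600 - 1, 1, 0, 0] = 2671465728531600 := by
  refine ⟨?_, mult4 _ _ _ _ _ (by decide), mult4 _ _ _ _ _ (by decide),
    mult4 _ _ _ _ _ (by decide), mult4 _ _ _ _ _ (by decide), mult4 _ _ _ _ _ (by decide),
    mult4 _ _ _ _ _ (by decide), mult4 _ _ _ _ _ (by decide), ?_⟩
  · have hsub : ↑(T.image g) ⊆ {m : Fin 4 → ℕ | Nat.multinomial Finset.univ m = 2671465728531600} := by
      intro m hm
      obtain ⟨p, hp, rfl⟩ := Finset.mem_image.1 hm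
      exact key p hp
    have hcard : (T.image g).card = 180 := by
      rw [Finset.card_image_of_injective _ ginj]
      rfl
    calc (180 : ℕ) = (T.image g).card := hcard.symm
      _ = (↑(T.image g) : Set (Fin 4 → ℕ)).ncard := (Set.ncard_coe_finset _).symm
      _ ≤ Nk 4 2671465728531600 :=
          Set.ncard_le_ncard hsub (finS 2671465728531600 (by norm_num))
  · have h := L0 (2671465728531600 - 1)
    norm_num at h ⊢
    exact h
end

section
/- Let k ≥ 2 and let m_1, …, m_k be nonnegative integers with m = m_1 + ⋯ + m_k. If m_i ≤ m − 2 for every index i, then m(m-1)/2 ≤ (m_1 + ⋯ + m_k)!/(m_1! ⋯ m_k!). -/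
open Finset Nat

lemma aux_choose_le_multinomial {α : Type*} [DecidableEq α] (s A : Finset α) (hA : A ⊆ s)
    (f : α → ℕ) :
    Nat.choose (∑ i ∈ s, f i) (∑ i ∈ A, f i) ≤ Nat.multinomial s f := by
  have hsum : ∑ i ∈ A, f i + ∑ i ∈ s \ A, f i = ∑ i ∈ s, f i := by
    rw [add_comm, Finset.sum_sdiff hA]
  have key : Nat.multinomial s f =
      Nat.choose (∑ i ∈ s, f i) (∑ i ∈ A, f i) *
        (Nat.multinomial A f * Nat.multinomial (s \ A) f) := by
    have hP : (0:ℕ) < ∏ i ∈ s, (f i)! := Finset.prod_pos fun i _ => Nat.factorial_pos _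
    apply Nat.eq_of_mul_eq_mul_left hP
    rw [Nat.multinomial_spec]
    have hprod : (∏ i ∈ s, (f i)!) = (∏ i ∈ A, (f i)!) * ∏ i ∈ s \ A, (f i)! := by
      rw [mul_comm, Finset.prod_sdiff hA]
    rw [hprod]
    symm
    calc (∏ i ∈ A, (f i)!) * (∏ i ∈ s \ A, (f i)!) *
        (Nat.choose (∑ i ∈ s, f i) (∑ i ∈ A, f i) *
          (Nat.multinomial A f * Nat.multinomial (s \ A) f))
        = Nat.choose (∑ i ∈ s, f i) (∑ i ∈ A, f i) *
          (((∏ i ∈ A, (f i)!) * Nat.multinomial A f) *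
            ((∏ i ∈ s \ A, (f i)!) * Nat.multinomial (s \ A) f)) := by ring
      _ = Nat.choose (∑ i ∈ s, f i) (∑ i ∈ A, f i) *
            ((∑ i ∈ A, f i)! * (∑ i ∈ s \ A, f i)!) := by
          rw [Nat.multinomial_spec, Nat.multinomial_spec]
      _ = (∑ i ∈ s, f i)! := by
          rw [← hsum]
          have h := Nat.choose_mul_factorial_mul_factorial
            (Nat.le_add_right (∑ i ∈ A, f i) (∑ i ∈ s \ A, f i))
          simp only [Nat.add_sub_cancel_left] at h
          rw [← h]; ring
  rw [key]
  exact Nat.le_mul_of_pos_right _ (Nat.mul_pos (Nat.multinomial_pos _ _) (Nat.multinomial_pos _ _))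

lemma aux_choose_mono_half (n : ℕ) {a b : ℕ} (hab : a ≤ b) (hb : b ≤ n / 2) :
    n.choose a ≤ n.choose b := by
  induction b, hab using Nat.le_induction with
  | base => exact le_refl _
  | succ c hc ih =>
      exact (ih (by omega)).trans (Nat.choose_le_succ_of_lt_half_left (by omega))

lemma aux_choose_two_le {n r : ℕ} (h2 : 2 ≤ r) (hr : r ≤ n - 2) :
    n.choose 2 ≤ n.choose r := by
  rcases le_or_gt r (n / 2) with h | h
  · exact aux_choose_mono_half n h2 h
  · have hrn : r ≤ n := by omega
    rw [← Nat.choose_symm hrn]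
    exact aux_choose_mono_half n (by omega) (by omega)

theorem choose_two_le_multinomial (k : ℕ) (hk : 2 ≤ k) (m : Fin k → ℕ)
    (h : ∀ i, m i ≤ (∑ i, m i) - 2) :
    (∑ i, m i) * ((∑ i, m i) - 1) / 2 ≤ Nat.multinomial Finset.univ m := by
  rw [← Nat.choose_two_right]
  by_cases hex : ∃ i, 2 ≤ m i
  · obtain ⟨i, hi⟩ := hex
    have h1 := aux_choose_le_multinomial Finset.univ {i} (Finset.subset_univ _) m
    rw [Finset.sum_singleton] at h1
    exact le_trans (aux_choose_two_le hi (h i)) h1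
  · push_neg at hex
    have hfact : ∏ i, (m i)! = 1 :=
      Finset.prod_eq_one fun i _ => Nat.factorial_eq_one.mpr (by have := hex i; omega)
    have hmul : Nat.multinomial Finset.univ m = (∑ i, m i)! := by
      have hs := Nat.multinomial_spec Finset.univ m
      rwa [hfact, one_mul] at hs
    rw [hmul]
    rcases le_or_gt (∑ i, m i) 1 with h1 | h1
    · rw [Nat.choose_eq_zero_of_lt (by omega)]
      exact Nat.zero_le _
    · calc (∑ i, m i).choose 2 ≤ (∑ i, m i).choose 2 * (2! * ((∑ i, m i) - 2)!) :=
          Nat.le_mul_of_pos_right _ (Nat.mul_pos (Nat.factorial_pos _) (Nat.factorial_pos _))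
        _ = (∑ i, m i)! := by
            rw [← mul_assoc]; exact Nat.choose_mul_factorial_mul_factorial h1
end

section
/- For every fixed integer k ≥ 2 there is a constant C > 0 such that for all M ≥ 3, the number of k-tuples (m_1, …, m_k) of nonnegative integers with m = m_1 + ⋯ + m_k, with 2 < (m_1 + ⋯ + m_k)!/(m_1! ⋯ m_k!) ≤ M, and with m_i ≤ m − 2 for every index i, is at most C · M^{1/2} · (log M)^{k-1}. -/
/-- `2^k ≤ choose n k` whenever `2k ≤ n`. -/
lemma aux_two_pow_le_choose : ∀ n k : ℕ, 2 * k ≤ n → 2 ^ k ≤ n.choose k := by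
  intro n
  induction n with
  | zero => intro k hk; have hk0 : k = 0 := by omega
            subst hk0; simp
  | succ n ih =>
    intro k hk
    match k with
    | 0 => simp
    | k + 1 =>
      rw [Nat.choose_succ_succ]
      by_cases h : 2 * (k + 1) ≤ n
      · exact le_trans (ih (k + 1) h) (Nat.le_add_left _ _)
      · have hn : n = 2 * k + 1 := by omega
        subst hn
        have hsym : (2 * k + 1).choose (k + 1) = (2 * k + 1).choose k := by
          have : 2 * k + 1 - k = k + 1 := by omega
          rw [← this, Nat.choose_symm (by omega)]
        have hk' : 2 ^ k ≤ (2 * k + 1).choose k := ih k (by omega)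
        rw [hsym, pow_succ]
        omega

/-- `choose n` is monotone below `n/2`. -/
lemma aux_choose_mono (n : ℕ) : ∀ b a : ℕ, a ≤ b → b ≤ n / 2 → n.choose a ≤ n.choose b := by
  intro b
  induction b with
  | zero => intro a ha _; simp [Nat.le_zero.mp ha]
  | succ b ih =>
    intro a ha hb
    rcases Nat.lt_or_ge a (b + 1) with h | h
    · exact le_trans (ih a (Nat.lt_succ_iff.mp h) (by omega))
        (Nat.choose_le_succ_of_lt_half_left (by omega))
    · have : a = b + 1 := le_antisymm ha h
      subst this; exact le_rfl

/-- The multinomial coefficient dominates each single binomial coefficient. -/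
lemma aux_choose_le_multinomial_s18 {k : ℕ} (m : Fin k → ℕ) (i : Fin k) :
    (∑ j, m j).choose (m i) ≤ Nat.multinomial Finset.univ m := by
  have h := Nat.multinomial_insert (Finset.notMem_erase i Finset.univ) m
  rw [Finset.insert_erase (Finset.mem_univ i)] at h
  have hsum : m i + ∑ j ∈ Finset.univ.erase i, m j = ∑ j, m j :=
    Finset.add_sum_erase _ _ (Finset.mem_univ i)
  rw [h, hsum]
  exact Nat.le_mul_of_pos_right _ (Nat.multinomial_pos _ _)

theorem count_nontrivial_multinomials (k : ℕ) (hk : 2 ≤ k) :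
    ∃ C : ℝ, 0 < C ∧ ∀ M : ℕ, 3 ≤ M →
      (({m : Fin k → ℕ | 2 < Nat.multinomial Finset.univ m ∧
          Nat.multinomial Finset.univ m ≤ M ∧
          ∀ i, m i ≤ (∑ i, m i) - 2}.ncard : ℝ)) ≤
        C * Real.sqrt M * (Real.log M) ^ (k - 1) := by
  refine ⟨(k : ℝ) * (k + 4) * 3 ^ (k - 1), by positivity, ?_⟩
  intro M hM
  set B : ℕ := k + Nat.sqrt (2 * M) + 1 with hB
  set L : ℕ := Nat.log 2 M with hL
  set F : Finset (Fin k → ℕ) :=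
    Finset.univ.biUnion (fun i : Fin k =>
      Fintype.piFinset (fun j => Finset.range (if j = i then B + 1 else L + 1))) with hF
  -- Step 1: the set is contained in ↑F
  have hsub : {m : Fin k → ℕ | 2 < Nat.multinomial Finset.univ m ∧
      Nat.multinomial Finset.univ m ≤ M ∧
      ∀ i, m i ≤ (∑ i, m i) - 2} ⊆ (↑F : Set (Fin k → ℕ)) := by
    intro m hm
    obtain ⟨h2, hMle, hsmall⟩ := hm
    obtain ⟨i, -, hi⟩ := Finset.exists_max_image Finset.univ m
      (Finset.univ_nonempty_iff.mpr ⟨⟨0, by omega⟩⟩)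
    simp only [Finset.mem_univ, forall_true_left] at hi
    set n := ∑ j, m j with hn
    have hmi_le_n : m i ≤ n := Finset.single_le_sum (fun _ _ => Nat.zero_le _) (Finset.mem_univ i)
    -- n ≤ B
    have hnB : n ≤ B := by
      by_cases hmi : m i ≤ 1
      · have : n ≤ ∑ _j : Fin k, 1 :=
          Finset.sum_le_sum (fun j _ => le_trans (hi j) hmi)
        simp at this
        omega
      · push_neg at hmi
        have h1 : m i ≤ n - 2 := hsmall i
        have hn4 : m i + 2 ≤ n := by omega
        set r := min (m i) (n - m i) with hr
        have hr2 : 2 ≤ r := by omega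
        have hrn : 2 * r ≤ n := by omega
        have hs : n.choose r = n.choose (m i) := by
          rcases min_cases (m i) (n - m i) with ⟨h, -⟩ | ⟨h, -⟩
          · rw [hr, h]
          · rw [hr, h, Nat.choose_symm hmi_le_n]
        have hle : n.choose 2 ≤ M := by
          calc n.choose 2 ≤ n.choose r := aux_choose_mono n r 2 hr2 (by omega)
            _ = n.choose (m i) := hs
            _ ≤ Nat.multinomial Finset.univ m := aux_choose_le_multinomial_s18 m i
            _ ≤ M := hMle
        have heven : 2 ∣ n * (n - 1) := by
          have := Nat.even_mul_succ_self (n - 1)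
          have h' : (n - 1) * (n - 1 + 1) = n * (n - 1) := by
            rw [Nat.sub_add_cancel (by omega), mul_comm]
          rw [h'] at this
          exact this.two_dvd
        rw [Nat.choose_two_right] at hle
        have hmul : n * (n - 1) ≤ 2 * M := by
          obtain ⟨c, hc⟩ := heven
          omega
        have hsq : (n - 1) * (n - 1) ≤ 2 * M :=
          le_trans (Nat.mul_le_mul_right _ (by omega)) hmul
        have : n - 1 ≤ Nat.sqrt (2 * M) := Nat.le_sqrt.mpr hsq
        omega
    -- membership
    refine Finset.mem_coe.mpr (Finset.mem_biUnion.mpr ⟨i, Finset.mem_univ i, ?_⟩)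
    rw [Fintype.mem_piFinset]
    intro j
    rw [Finset.mem_range]
    by_cases hj : j = i
    · rw [if_pos hj, hj]
      omega
    · rw [if_neg hj]
      -- m j ≤ L
      have hji : m j ≤ m i := hi j
      have h2j : 2 * m j ≤ n := by
        have : m j + m i ≤ n := by
          have := Finset.add_sum_erase Finset.univ m (Finset.mem_univ i)
          have h2 : m j ≤ ∑ l ∈ Finset.univ.erase i, m l :=
            Finset.single_le_sum (fun _ _ => Nat.zero_le _)
              (Finset.mem_erase.mpr ⟨hj, Finset.mem_univ j⟩)
          omega
        omega
      have hpow : 2 ^ (m j) ≤ M := by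
        calc 2 ^ (m j) ≤ n.choose (m j) := aux_two_pow_le_choose n (m j) h2j
          _ ≤ Nat.multinomial Finset.univ m := aux_choose_le_multinomial_s18 m j
          _ ≤ M := hMle
      have : m j ≤ L := (Nat.le_log_iff_pow_le one_lt_two (by omega)).mpr hpow
      omega
  -- Step 2: cardinality of F
  have hcard : F.card ≤ k * ((B + 1) * (L + 1) ^ (k - 1)) := by
    calc F.card ≤ ∑ i : Fin k, (Fintype.piFinset (fun j : Fin k =>
          Finset.range (if j = i then B + 1 else L + 1))).card :=
        Finset.card_biUnion_le
      _ = ∑ _i : Fin k, (B + 1) * (L + 1) ^ (k - 1) := by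
          refine Finset.sum_congr rfl (fun i _ => ?_)
          rw [Fintype.card_piFinset]
          rw [← Finset.mul_prod_erase Finset.univ _ (Finset.mem_univ i)]
          rw [if_pos rfl, Finset.card_range]
          congr 1
          rw [Finset.prod_congr rfl (fun j hj => by
            rw [if_neg (Finset.mem_erase.mp hj).1, Finset.card_range])]
          rw [Finset.prod_const, Finset.card_erase_of_mem (Finset.mem_univ i),
            Finset.card_univ, Fintype.card_fin]
      _ = k * ((B + 1) * (L + 1) ^ (k - 1)) := by
          rw [Finset.sum_const, Finset.card_univ, Fintype.card_fin, smul_eq_mul]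
  have hncard : ({m : Fin k → ℕ | 2 < Nat.multinomial Finset.univ m ∧
      Nat.multinomial Finset.univ m ≤ M ∧
      ∀ i, m i ≤ (∑ i, m i) - 2}).ncard ≤ F.card := by
    have := Set.ncard_le_ncard hsub F.finite_toSet
    rwa [Set.ncard_coe_finset] at this
  -- Step 3: real estimates
  have hM1 : (1 : ℝ) ≤ (M : ℝ) := by exact_mod_cast le_trans (by norm_num) hM
  have hsqrt1 : (1 : ℝ) ≤ Real.sqrt M := Real.one_le_sqrt.mpr hM1
  have hlog1 : (1 : ℝ) ≤ Real.log M := by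
    have h3 : (1 : ℝ) < Real.log 3 := by
      rw [show (1 : ℝ) = Real.log (Real.exp 1) by rw [Real.log_exp]]
      exact Real.log_lt_log (Real.exp_pos 1) (lt_trans Real.exp_one_lt_d9 (by norm_num))
    exact le_trans h3.le (Real.log_le_log (by norm_num) (by exact_mod_cast hM))
  have hBreal : ((B : ℝ) + 1) ≤ ((k : ℝ) + 4) * Real.sqrt M := by
    have hs : (Nat.sqrt (2 * M) : ℝ) ≤ Real.sqrt (2 * M) := by
      rw [Real.le_sqrt (by positivity) (by positivity)]
      have := Nat.sqrt_le' (2 * M)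
      exact_mod_cast this
    have hs2 : Real.sqrt ((2 : ℝ) * M) ≤ 2 * Real.sqrt M := by
      rw [show (2 : ℝ) * Real.sqrt M = Real.sqrt 4 * Real.sqrt M by
            rw [show (4 : ℝ) = 2 ^ 2 by norm_num, Real.sqrt_sq (by norm_num : (0:ℝ) ≤ 2)],
          ← Real.sqrt_mul (by norm_num : (0:ℝ) ≤ 4)]
      exact Real.sqrt_le_sqrt (by linarith)
    have h2M : (Nat.sqrt (2 * M) : ℝ) ≤ 2 * Real.sqrt M := le_trans hs hs2
    have hcast : (B : ℝ) + 1 = (k : ℝ) + (Nat.sqrt (2 * M) : ℝ) + 2 := by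
      rw [hB]; push_cast; ring
    rw [hcast]
    nlinarith [hsqrt1, Nat.cast_nonneg (α := ℝ) k]
  have hLreal : ((L : ℝ) + 1) ≤ 3 * Real.log M := by
    have hpow : (2 : ℕ) ^ L ≤ M := by
      rw [hL]; exact Nat.pow_log_le_self 2 (Nat.one_le_iff_ne_zero.mp (le_trans (by norm_num) hM))
    have hlog2 : (L : ℝ) * Real.log 2 ≤ Real.log M := by
      rw [← Real.log_pow]
      exact Real.log_le_log (by positivity) (by exact_mod_cast hpow)
    have h2 : (0.6931471803 : ℝ) < Real.log 2 := Real.log_two_gt_d9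
    have hLle : (L : ℝ) ≤ 2 * Real.log M := by
      nlinarith [Nat.cast_nonneg (α := ℝ) L]
    linarith
  -- Final combination
  calc (({m : Fin k → ℕ | 2 < Nat.multinomial Finset.univ m ∧
          Nat.multinomial Finset.univ m ≤ M ∧
          ∀ i, m i ≤ (∑ i, m i) - 2}.ncard : ℝ))
      ≤ (F.card : ℝ) := by exact_mod_cast hncard
    _ ≤ (k : ℝ) * (((B : ℝ) + 1) * ((L : ℝ) + 1) ^ (k - 1)) := by
        have := hcard
        calc (F.card : ℝ) ≤ ((k * ((B + 1) * (L + 1) ^ (k - 1)) : ℕ) : ℝ) := by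
              exact_mod_cast this
          _ = (k : ℝ) * (((B : ℝ) + 1) * ((L : ℝ) + 1) ^ (k - 1)) := by push_cast; ring
    _ ≤ (k : ℝ) * ((((k : ℝ) + 4) * Real.sqrt M) * (3 * Real.log M) ^ (k - 1)) := by
        have hLnn : (0 : ℝ) ≤ (L : ℝ) + 1 := by positivity
        have := hBreal
        have := hLreal
        gcongr
    _ = (k : ℝ) * ((k : ℝ) + 4) * 3 ^ (k - 1) * Real.sqrt M * Real.log M ^ (k - 1) := by
        rw [mul_pow]; ring
end
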